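/- Fix θ ∈ (0,1), λ > 0, and set τ = (λ(1−θ)²/(2(1+θ)))^{1/(1−θ)}. Then the function u : ℝᵐ → ℝ given by u(x) = τ·|x|^{2/(1−θ)} is C², and at every x ≠ 0 it satisfies Δ∞ᴺ u(x) = λ·u(x)^θ, where Δ∞ᴺ u = ⟨D²u · ∇u/|∇u|, ∇u/|∇u|⟩. -/

import Mathlib

set_option linter.unusedSectionVars false

open Real Filter Topology

set_option maxHeartbeats 1000000
set_option synthInstance.maxHeartbeats 400000

variable {E : Type*} [NormedAddCommGroup E] [InnerProductSpace ℝ E]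

theorem hasFDerivAt_norm_rpow_of_ne {x : E} (hx : x ≠ 0) (q : ℝ) :
    HasFDerivAt (fun x : E => ‖x‖ ^ q) ((q * ‖x‖ ^ (q - 2)) • innerSL ℝ x) x := by
  have hn : ‖x‖ ≠ 0 := norm_ne_zero_iff.mpr hx
  have h := ((hasStrictFDerivAt_norm_sq x).rpow_const (p := q / 2)
    (Or.inl (by positivity))).hasFDerivAt
  have e1 : (fun x : E => (‖x‖ ^ 2) ^ (q / 2)) = fun x : E => ‖x‖ ^ q := by
    funext y
    rw [← Real.rpow_natCast ‖y‖ 2, ← Real.rpow_mul (norm_nonneg _)]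
    congr 1
    ring
  have e2 : (q / 2 * (‖x‖ ^ 2) ^ (q / 2 - 1)) • (2 • innerSL ℝ x)
      = (q * ‖x‖ ^ (q - 2)) • innerSL ℝ x := by
    have h3 : ((‖x‖ ^ 2 : ℝ)) ^ (q / 2 - 1) = ‖x‖ ^ (q - 2) := by
      rw [← Real.rpow_natCast ‖x‖ 2, ← Real.rpow_mul (norm_nonneg _)]
      congr 1
      ring
    rw [← Nat.cast_smul_eq_nsmul ℝ, smul_smul, h3]
    congr 1
    push_cast
    ring
  rw [e1, e2] at h
  exact h

/-- The inner product as an `ℝ`-linear continuous map (no star). -/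
noncomputable def innerR : E →L[ℝ] E →L[ℝ] ℝ := innerSL ℝ

@[simp] theorem innerR_apply (x y : E) : innerR x y = inner ℝ x y := rfl

theorem norm_innerR_apply (x : E) : ‖(innerR x : E →L[ℝ] ℝ)‖ = ‖x‖ :=
  innerSL_apply_norm (𝕜 := ℝ) x

theorem norm_innerR_le : ‖(innerR : E →L[ℝ] E →L[ℝ] ℝ)‖ ≤ 1 := by
  apply ContinuousLinearMap.opNorm_le_bound _ zero_le_one
  intro v
  rw [norm_innerR_apply, one_mul]

/-- The Hessian of `x ↦ ‖x‖ ^ p`. -/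
noncomputable def normRpowHess (p : ℝ) (y : E) : E →L[ℝ] E →L[ℝ] ℝ :=
  (p * ‖y‖ ^ (p - 2)) • innerR +
    (p • (((p - 2) * ‖y‖ ^ (p - 2 - 2)) • innerR y)).smulRight (innerR y)

theorem normRpowHess_zero {p : ℝ} (hp : 2 < p) : normRpowHess p (0 : E) = 0 := by
  have h2 : p - 2 ≠ 0 := ne_of_gt (by linarith)
  ext v w
  simp [normRpowHess, Real.zero_rpow h2]

theorem hasFDerivAt_normRpowGrad {p : ℝ} (hp : 2 < p) (y : E) :
    HasFDerivAt (fun z : E => (p * ‖z‖ ^ (p - 2)) • innerR z) (normRpowHess p y) y := by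
  have h2 : p - 2 ≠ 0 := ne_of_gt (by linarith)
  by_cases hy : y = 0
  · subst hy
    rw [normRpowHess_zero hp]
    rw [hasFDerivAt_iff_isLittleO_nhds_zero]
    simp only [zero_add, norm_zero, Real.zero_rpow h2, mul_zero, zero_smul, sub_zero,
      ContinuousLinearMap.zero_apply]
    rw [Asymptotics.isLittleO_iff]
    intro c hc
    have hcont : ContinuousAt (fun h : E => p * ‖h‖ ^ (p - 2)) 0 :=
      continuousAt_const.mul ((continuous_norm.continuousAt).rpow_const (Or.inr (by linarith)))
    have h0 : Filter.Tendsto (fun h : E => p * ‖h‖ ^ (p - 2)) (nhds 0) (nhds 0) := by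
      simpa [Real.zero_rpow h2] using hcont.tendsto
    filter_upwards [h0.eventually_le_const hc] with h hh
    have hkey : ‖(p * ‖h‖ ^ (p - 2)) • innerR h‖ = (p * ‖h‖ ^ (p - 2)) * ‖h‖ := by
      rw [← (innerR (E := E)).map_smul, norm_innerR_apply, norm_smul, Real.norm_eq_abs,
        abs_of_nonneg (by positivity)]
    rw [hkey]
    exact mul_le_mul_of_nonneg_right hh (norm_nonneg _)
  · have h1 := (hasFDerivAt_norm_rpow_of_ne hy (p - 2)).const_mul p
    have hd2 := (innerR (E := E)).hasFDerivAt (x := y)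
    exact h1.smul hd2

theorem norm_normRpowHess_le {p : ℝ} (hp : 2 < p) (y : E) :
    ‖normRpowHess p y‖ ≤ (p + p * |p - 2|) * ‖y‖ ^ (p - 2) := by
  have h2 : p - 2 ≠ 0 := ne_of_gt (by linarith)
  by_cases hy : y = 0
  · subst hy
    rw [normRpowHess_zero hp]
    have hz : ‖(0:E)‖ ^ (p - 2) = 0 := by rw [norm_zero, Real.zero_rpow h2]
    rw [hz, mul_zero]
    exact le_of_eq ContinuousLinearMap.opNorm_zero
  · have hny : (0:ℝ) < ‖y‖ := norm_pos_iff.mpr hy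
    have e1 : ‖y‖ ^ (p - 2 - 2) * (‖y‖ * ‖y‖) = ‖y‖ ^ (p - 2) := by
      rw [show ‖y‖ * ‖y‖ = ‖y‖ ^ ((2:ℕ):ℝ) by rw [Real.rpow_natCast]; ring,
        ← Real.rpow_add hny]
      congr 1
      push_cast
      ring
    have hb1 : ‖(p * ‖y‖ ^ (p - 2)) • (innerR : E →L[ℝ] E →L[ℝ] ℝ)‖ ≤ p * ‖y‖ ^ (p - 2) := by
      calc ‖(p * ‖y‖ ^ (p - 2)) • (innerR : E →L[ℝ] E →L[ℝ] ℝ)‖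
          ≤ ‖(p * ‖y‖ ^ (p - 2) : ℝ)‖ * ‖(innerR : E →L[ℝ] E →L[ℝ] ℝ)‖ :=
            ContinuousLinearMap.opNorm_smul_le _ _
        _ ≤ ‖(p * ‖y‖ ^ (p - 2) : ℝ)‖ * 1 :=
            mul_le_mul_of_nonneg_left norm_innerR_le (norm_nonneg _)
        _ = p * ‖y‖ ^ (p - 2) := by
            rw [mul_one, Real.norm_eq_abs, abs_of_nonneg (by positivity)]
    have hsm : (p • (((p - 2) * ‖y‖ ^ (p - 2 - 2)) • innerR y) : E →L[ℝ] ℝ)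
        = innerR ((p * ((p - 2) * ‖y‖ ^ (p - 2 - 2))) • y) := by
      rw [(innerR (E := E)).map_smul]
      module
    have hb2 : ‖(p • (((p - 2) * ‖y‖ ^ (p - 2 - 2)) • innerR y)).smulRight (innerR y)‖
        = p * |p - 2| * ‖y‖ ^ (p - 2) := by
      rw [ContinuousLinearMap.norm_smulRight_apply, norm_innerR_apply, hsm, norm_innerR_apply,
        norm_smul, Real.norm_eq_abs, abs_mul, abs_of_nonneg (by positivity : (0:ℝ) ≤ p), abs_mul,
        abs_of_nonneg (by positivity : (0:ℝ) ≤ ‖y‖ ^ (p - 2 - 2))]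
      calc p * (|p - 2| * ‖y‖ ^ (p - 2 - 2)) * ‖y‖ * ‖y‖
          = p * |p - 2| * (‖y‖ ^ (p - 2 - 2) * (‖y‖ * ‖y‖)) := by ring
        _ = p * |p - 2| * ‖y‖ ^ (p - 2) := by rw [e1]
    calc ‖normRpowHess p y‖
        = ‖(p * ‖y‖ ^ (p - 2)) • (innerR : E →L[ℝ] E →L[ℝ] ℝ) +
          (p • (((p - 2) * ‖y‖ ^ (p - 2 - 2)) • innerR y)).smulRight (innerR y)‖ := rfl
      _ ≤ ‖(p * ‖y‖ ^ (p - 2)) • (innerR : E →L[ℝ] E →L[ℝ] ℝ)‖ +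
          ‖(p • (((p - 2) * ‖y‖ ^ (p - 2 - 2)) • innerR y)).smulRight (innerR y)‖ :=
          ContinuousLinearMap.opNorm_add_le _ _
      _ ≤ p * ‖y‖ ^ (p - 2) + p * |p - 2| * ‖y‖ ^ (p - 2) := add_le_add hb1 hb2.le
      _ = (p + p * |p - 2|) * ‖y‖ ^ (p - 2) := by ring

theorem continuous_normRpowHess {p : ℝ} (hp : 2 < p) :
    Continuous fun y : E => normRpowHess p y := by
  have h2 : p - 2 ≠ 0 := ne_of_gt (by linarith)
  rw [continuous_iff_continuousAt]
  intro y
  by_cases hy : y = 0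
  · subst hy
    rw [ContinuousAt, normRpowHess_zero hp]
    have hbt : Filter.Tendsto (fun y : E => (p + p * |p - 2|) * ‖y‖ ^ (p - 2)) (nhds 0)
        (nhds 0) := by
      have hcont : ContinuousAt (fun y : E => (p + p * |p - 2|) * ‖y‖ ^ (p - 2)) 0 :=
        continuousAt_const.mul ((continuous_norm.continuousAt).rpow_const (Or.inr (by linarith)))
      simpa [Real.zero_rpow h2] using hcont.tendsto
    exact squeeze_zero_norm (f := fun y : E => normRpowHess p y)
      (a := fun y : E => (p + p * |p - 2|) * ‖y‖ ^ (p - 2)) (norm_normRpowHess_le hp) hbt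
  · have hny : ‖y‖ ≠ 0 := norm_ne_zero_iff.mpr hy
    unfold normRpowHess
    haveI : ContinuousAdd (E →L[ℝ] E →L[ℝ] ℝ) :=
      ⟨by have h := (inferInstance : IsTopologicalAddGroup (E →L[ℝ] E →L[ℝ] ℝ)).continuous_add; exact h⟩
    refine ContinuousAt.add (f := fun y : E => (p * ‖y‖ ^ (p - 2)) • innerR)
      (g := fun y : E => (p • (((p - 2) * ‖y‖ ^ (p - 2 - 2)) • innerR y)).smulRight (innerR y)) ?_ ?_
    · exact (continuousAt_const.mul
        ((continuous_norm.continuousAt).rpow_const (Or.inl hny))).smul continuousAt_const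
    · have hc1 : ContinuousAt (fun z : E => p • (((p - 2) * ‖z‖ ^ (p - 2 - 2)) • innerR z)) y :=
        ((continuousAt_const.mul
          ((continuous_norm.continuousAt).rpow_const (Or.inl hny))).smul
          (innerR (E := E)).continuous.continuousAt).const_smul p
      have hc2 : ContinuousAt (fun z : E => innerR z) y :=
        (innerR (E := E)).continuous.continuousAt
      exact isBoundedBilinearMap_smulRight.continuous.continuousAt.comp (hc1.prodMk hc2)

theorem rpow_sub_two_sq {y : E} (hy : (0:ℝ) < ‖y‖) (p : ℝ) :
    ‖y‖ ^ (p - 2 - 2) * (‖y‖ * ‖y‖) = ‖y‖ ^ (p - 2) := by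
  rw [show ‖y‖ * ‖y‖ = ‖y‖ ^ ((2:ℕ):ℝ) by rw [Real.rpow_natCast]; ring,
    ← Real.rpow_add hy]
  congr 1
  push_cast
  ring

theorem contDiff_two_norm_rpow {p : ℝ} (hp : 2 < p) : ContDiff ℝ 2 (fun x : E => ‖x‖ ^ p) := by
  have hp1 : (1:ℝ) < p := by linarith
  rw [show (2 : WithTop ℕ∞) = 1 + 1 from rfl, contDiff_succ_iff_fderiv]
  refine ⟨differentiable_norm_rpow hp1, by simp, ?_⟩
  have hfd : (fderiv ℝ fun x : E => ‖x‖ ^ p) = fun y : E => (p * ‖y‖ ^ (p - 2)) • innerR y := by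
    funext y
    exact fderiv_norm_rpow y hp1
  rw [hfd, contDiff_one_iff_fderiv]
  refine ⟨fun y => (hasFDerivAt_normRpowGrad hp y).differentiableAt, ?_⟩
  have h2 : (fderiv ℝ fun y : E => (p * ‖y‖ ^ (p - 2)) • innerR y)
      = fun y : E => normRpowHess p y :=
    funext fun y => (hasFDerivAt_normRpowGrad hp y).fderiv
  rw [h2]
  exact continuous_normRpowHess hp


/-- The normalized infinity Laplacian of a function on Euclidean space:
the second derivative in the direction of the normalized gradient. -/
noncomputable def normInfLaplacian {m : ℕ}
    (v : EuclideanSpace ℝ (Fin m) → ℝ) (x : EuclideanSpace ℝ (Fin m)) : ℝ :=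
  iteratedFDeriv ℝ 2 v x
    ![‖gradient v x‖⁻¹ • gradient v x, ‖gradient v x‖⁻¹ • gradient v x]

/-- Sharpness of the constant in item 5) of the main theorem: with
`τ = (λ(1−θ)²/(2(1+θ)))^{1/(1−θ)}`, the function `u x = τ * ‖x‖^{2/(1−θ)}`
is C² and satisfies `Δ∞ᴺ u = λ uᶿ` away from the origin. -/
theorem normInfLaplacian_sharp_radial {m : ℕ} (θ lam : ℝ)
    (hθ0 : 0 < θ) (hθ1 : θ < 1) (hlam : 0 < lam) :
    ContDiff ℝ 2 (fun x : EuclideanSpace ℝ (Fin m) =>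
      (lam * (1 - θ) ^ 2 / (2 * (1 + θ))) ^ (1 / (1 - θ)) * ‖x‖ ^ (2 / (1 - θ))) ∧
    ∀ x : EuclideanSpace ℝ (Fin m), x ≠ 0 →
      normInfLaplacian (fun x : EuclideanSpace ℝ (Fin m) =>
          (lam * (1 - θ) ^ 2 / (2 * (1 + θ))) ^ (1 / (1 - θ)) *
            ‖x‖ ^ (2 / (1 - θ))) x =
        lam * ((lam * (1 - θ) ^ 2 / (2 * (1 + θ))) ^ (1 / (1 - θ)) *
          ‖x‖ ^ (2 / (1 - θ))) ^ θ := by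

  have hne1 : (1:ℝ) - θ ≠ 0 := by linarith
  have hne2 : (1:ℝ) + θ ≠ 0 := by linarith
  set E := EuclideanSpace ℝ (Fin m)
  set K : ℝ := lam * (1 - θ) ^ 2 / (2 * (1 + θ)) with hK_def
  set p : ℝ := 2 / (1 - θ) with hp_def
  have hK : 0 < K := by
    apply div_pos (mul_pos hlam (pow_pos (by linarith) 2)) (by linarith)
  set c : ℝ := K ^ (1 / (1 - θ)) with hc_def
  have hc : 0 < c := Real.rpow_pos_of_pos hK _
  have hp : 2 < p := by
    rw [hp_def, lt_div_iff₀ (by linarith)]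
    nlinarith
  have hp1 : (1:ℝ) < p := by linarith
  have hp0 : (0:ℝ) < p := by linarith
  constructor
  · exact contDiff_const.mul (contDiff_two_norm_rpow hp)
  · intro x hx
    have hx0 : (0:ℝ) < ‖x‖ := norm_pos_iff.mpr hx
    set u : E → ℝ := fun z => c * ‖z‖ ^ p with hu_def
    have hu' : ∀ y : E, HasFDerivAt u (c • ((p * ‖y‖ ^ (p - 2)) • innerR y)) y :=
      fun y => (hasFDerivAt_norm_rpow y hp1).const_mul c
    have hfd : (fderiv ℝ u) = fun z : E => c • ((p * ‖z‖ ^ (p - 2)) • innerR z) :=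
      funext fun y => (hu' y).fderiv
    -- gradient
    have hgrad : gradient u x = (c * (p * ‖x‖ ^ (p - 2))) • x := by
      have e : (InnerProductSpace.toDual ℝ E).symm (c • ((p * ‖x‖ ^ (p - 2)) • innerR x))
          = (c * (p * ‖x‖ ^ (p - 2))) • x := by
        have e2 : c • ((p * ‖x‖ ^ (p - 2)) • innerR x)
            = InnerProductSpace.toDual ℝ E ((c * (p * ‖x‖ ^ (p - 2))) • x) := by
          ext v
          simp only [InnerProductSpace.toDual_apply_apply, ContinuousLinearMap.smul_apply,
            innerR_apply, smul_eq_mul]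
          show _ = inner ℝ ((c * (p * ‖x‖ ^ (p - 2))) • x) v
          rw [real_inner_smul_left]
          ring
        rw [e2, LinearIsometryEquiv.symm_apply_apply]
      have h := (hu' x).hasGradientAt
      rw [e] at h
      exact h.gradient
    have hgn : ‖gradient u x‖ = c * (p * ‖x‖ ^ (p - 2)) * ‖x‖ := by
      rw [hgrad, norm_smul, Real.norm_eq_abs, abs_of_nonneg (by positivity)]
    have hunit : ‖gradient u x‖⁻¹ • gradient u x = ‖x‖⁻¹ • x := by
      rw [hgn, hgrad, smul_smul]
      congr 1
      have hs : (0:ℝ) < c * (p * ‖x‖ ^ (p - 2)) := by positivity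
      field_simp
    -- second derivative
    have hsecond : fderiv ℝ (fderiv ℝ u) x = c • normRpowHess p x := by
      rw [hfd]
      exact ((hasFDerivAt_normRpowGrad hp x).const_smul c).fderiv
    have hlap : normInfLaplacian u x
        = (c • normRpowHess p x) (‖x‖⁻¹ • x) (‖x‖⁻¹ • x) := by
      unfold normInfLaplacian
      rw [hunit, iteratedFDeriv_two_apply, hsecond]
      simp only [Matrix.cons_val_zero, Matrix.cons_val_one, Matrix.head_cons]
    have hinner1 : (inner ℝ (‖x‖⁻¹ • x) (‖x‖⁻¹ • x : E) : ℝ) = 1 := by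
      rw [real_inner_smul_left, real_inner_smul_right, real_inner_self_eq_norm_mul_norm]
      field_simp
    have hinner2 : (inner ℝ x (‖x‖⁻¹ • x : E) : ℝ) = ‖x‖ := by
      rw [real_inner_smul_right, real_inner_self_eq_norm_mul_norm]
      field_simp
    have hval : (c • normRpowHess p x) (‖x‖⁻¹ • x) (‖x‖⁻¹ • x)
        = c * (p * (p - 1)) * ‖x‖ ^ (p - 2) := by
      simp only [normRpowHess, ContinuousLinearMap.smul_apply, ContinuousLinearMap.add_apply,
        ContinuousLinearMap.smulRight_apply, innerR_apply, smul_eq_mul, hinner1, hinner2]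
      rw [show p * ((p - 2) * ‖x‖ ^ (p - 2 - 2) * ‖x‖) * ‖x‖
          = p * (p - 2) * (‖x‖ ^ (p - 2 - 2) * (‖x‖ * ‖x‖)) from by ring,
        rpow_sub_two_sq hx0 p]
      ring
    -- final algebra
    have hpθ : p * θ = p - 2 := by
      rw [hp_def]
      field_simp
      ring
    have hrpow : (c * ‖x‖ ^ p) ^ θ = c ^ θ * ‖x‖ ^ (p - 2) := by
      rw [Real.mul_rpow hc.le (Real.rpow_nonneg (norm_nonneg x) p),
        ← Real.rpow_mul (norm_nonneg x), hpθ]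
    have hcθ : lam * c ^ θ = c * (p * (p - 1)) := by
      have h1 : c ^ θ = K ^ (1 / (1 - θ) * θ) := by
        rw [hc_def, ← Real.rpow_mul hK.le]
      have h2 : c = K ^ (1 / (1 - θ) * θ) * K := by
        rw [hc_def, show K ^ (1 / (1 - θ) * θ) * K = K ^ (1 / (1 - θ) * θ + 1) from by
          rw [Real.rpow_add hK, Real.rpow_one]]
        congr 1
        field_simp
        ring
      have h3 : K * (p * (p - 1)) = lam := by
        rw [hK_def, hp_def]
        field_simp
        ring
      rw [h1, h2, ← h3]
      ring
    rw [hlap, hval, hrpow]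
    linear_combination (-(‖x‖ ^ (p - 2))) * hcθ
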